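/- arXiv:2309.07612 — 2 statements merged into one kernel-verified Lean document; each statement's English description precedes it below -/
import Mathlib

section
/- Let n > m ≥ 1 and d ≥ 1 be integers and let g_1, …, g_n ∈ ℂ[z_1, …, z_m] each have total degree at most d. Then there exists a nonzero polynomial A ∈ ℂ[x_1, …, x_n] of individual degree at most ⌈(nd)^{m/(n−m)}⌉ in each variable (the exponent m/(n−m) being a real number and ⌈·⌉ the ceiling) such that A(g_1, …, g_n) is the zero polynomial in ℂ[z_1, …, z_m]. -/
open MvPolynomial

/-- The box `{f | ∀ i, f i ≤ D}` of finsupps on `Fin k` is equivalent to `Fin k → Fin (D+1)`. -/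
noncomputable def boxEquiv (k D : ℕ) : {f : Fin k →₀ ℕ | ∀ i, f i ≤ D} ≃ (Fin k → Fin (D + 1)) where
  toFun f i := ⟨f.1 i, Nat.lt_succ_of_le (f.2 i)⟩
  invFun h := ⟨Finsupp.equivFunOnFinite.symm (fun i => (h i : ℕ)),
    fun i => by simpa using Nat.lt_succ_iff.mp (h i).2⟩
  left_inv f := by
    ext i
    simp
  right_inv h := by
    ext i
    simp

lemma finrank_restrictDegree (k D : ℕ) :
    Module.finrank ℂ (restrictDegree (Fin k) ℂ D) = (D + 1) ^ k := by
  haveI : Fintype {f : Fin k →₀ ℕ | ∀ i, f i ≤ D} := Fintype.ofEquiv _ (boxEquiv k D).symm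
  rw [restrictDegree, Module.finrank_eq_card_basis (basisRestrictSupport ℂ _),
    Fintype.card_congr (boxEquiv k D)]
  simp

lemma totalDegree_aeval_mem {m n d D : ℕ} (g : Fin n → MvPolynomial (Fin m) ℂ)
    (hg : ∀ i, (g i).totalDegree ≤ d) {A : MvPolynomial (Fin n) ℂ}
    (hA : A ∈ restrictDegree (Fin n) ℂ D) :
    (aeval g A).totalDegree ≤ n * (D * d) := by
  rw [mem_restrictDegree] at hA
  conv_lhs => rw [A.as_sum]
  rw [map_sum]
  refine totalDegree_finsetSum_le fun v hv => ?_
  rw [aeval_monomial]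
  refine (totalDegree_mul _ _).trans ?_
  have h1 : (algebraMap ℂ (MvPolynomial (Fin m) ℂ) (coeff v A)).totalDegree = 0 :=
    totalDegree_C _
  rw [h1, zero_add]
  rw [Finsupp.prod]
  refine (totalDegree_finset_prod _ _).trans ?_
  calc ∑ i ∈ v.support, (g i ^ v i).totalDegree
      ≤ ∑ i ∈ v.support, D * d := by
        refine Finset.sum_le_sum fun i _ => ?_
        exact (totalDegree_pow _ _).trans
          (Nat.mul_le_mul (hA v hv i) (hg i))
    _ ≤ ∑ _i : Fin n, D * d := Finset.sum_le_sum_of_subset (Finset.subset_univ _)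
    _ = n * (D * d) := by simp [Finset.sum_const, Fintype.card_fin, mul_comm]

lemma key_count (m n d : ℕ) (hm : 1 ≤ m) (hmn : m < n) (hd : 1 ≤ d)
    (D : ℕ) (hD : ((n * d : ℕ) : ℝ) ^ ((m : ℝ) / ((n : ℝ) - (m : ℝ))) ≤ D) :
    (n * (D * d) + 1) ^ m < (D + 1) ^ n := by
  set t := n * d with ht
  have htpos : 1 ≤ t := Nat.one_le_iff_ne_zero.mpr (Nat.mul_ne_zero (by omega) (by omega))
  set k := n - m with hk
  have hkpos : 0 < k := Nat.sub_pos_of_lt hmn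
  have hnk : n = k + m := by omega
  -- real inequality
  have hcast : ((n : ℝ) - (m : ℝ)) = (k : ℝ) := by
    push_cast [hk, Nat.cast_sub hmn.le]; ring
  set x : ℝ := ((t : ℕ) : ℝ) ^ ((m : ℝ) / ((n : ℝ) - (m : ℝ))) with hx
  have hx0 : 0 ≤ x := Real.rpow_nonneg (by positivity) _
  have hxlt : x < (D : ℝ) + 1 := lt_of_le_of_lt hD (by linarith)
  have hpow : x ^ k = (t : ℝ) ^ m := by
    rw [hx, hcast, ← Real.rpow_natCast (((t : ℕ) : ℝ) ^ ((m : ℝ) / (k : ℝ))) k,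
      ← Real.rpow_mul (by positivity), div_mul_cancel₀, Real.rpow_natCast]
    exact Nat.cast_ne_zero.mpr hkpos.ne'
  have hreal : (t : ℝ) ^ m < ((D : ℝ) + 1) ^ k := by
    rw [← hpow]
    exact pow_lt_pow_left₀ hxlt hx0 hkpos.ne'
  have hnat : t ^ m < (D + 1) ^ k := by
    have := hreal
    push_cast at this
    exact_mod_cast this
  calc (n * (D * d) + 1) ^ m ≤ (t * (D + 1)) ^ m := by
        refine Nat.pow_le_pow_left ?_ m
        have : n * (D * d) = t * D := by ring
        rw [this]; nlinarith
    _ = t ^ m * (D + 1) ^ m := by rw [mul_pow]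
    _ < (D + 1) ^ k * (D + 1) ^ m := by
        exact (Nat.mul_lt_mul_right (by positivity)).mpr hnat
    _ = (D + 1) ^ n := by rw [← pow_add, hnk]

/-- Existence part of Lemma 3.1: any tuple of `n > m` polynomials in `m` variables of
degree at most `d` has a nonzero annihilator of individual degree at most
`⌈(nd)^{m/(n−m)}⌉` in each variable. -/
theorem annihilator_exists_with_degree_bound
    (m n d : ℕ) (hm : 1 ≤ m) (hmn : m < n) (hd : 1 ≤ d)
    (g : Fin n → MvPolynomial (Fin m) ℂ)
    (hg : ∀ i, (g i).totalDegree ≤ d) :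
    ∃ A : MvPolynomial (Fin n) ℂ, A ≠ 0 ∧
      (∀ i, A.degreeOf i ≤ ⌈((n * d : ℕ) : ℝ) ^ ((m : ℝ) / ((n : ℝ) - (m : ℝ)))⌉₊) ∧
      MvPolynomial.aeval g A = 0 := by
  set D : ℕ := ⌈((n * d : ℕ) : ℝ) ^ ((m : ℝ) / ((n : ℝ) - (m : ℝ)))⌉₊ with hDdef
  set V := restrictDegree (Fin n) ℂ D with hV
  set W := restrictDegree (Fin m) ℂ (n * (D * d)) with hW
  have hmem : ∀ A ∈ V, aeval g A ∈ W := by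
    intro A hA
    apply restrictTotalDegree_le_restrictDegree
    rw [mem_restrictTotalDegree]
    exact totalDegree_aeval_mem g hg hA
  let T : V →ₗ[ℂ] W :=
    LinearMap.codRestrict W ((aeval g).toLinearMap.comp V.subtype) fun x => hmem x.1 x.2
  have hfr : Module.finrank ℂ W < Module.finrank ℂ V := by
    rw [hV, hW, finrank_restrictDegree, finrank_restrictDegree]
    exact key_count m n d hm hmn hd D (Nat.le_ceil _)
  have hker : LinearMap.ker T ≠ ⊥ := by
    intro h
    exact absurd (LinearMap.finrank_le_finrank_of_injective (LinearMap.ker_eq_bot.mp h))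
      (not_le.mpr hfr)
  obtain ⟨x, hxker, hx0⟩ := (Submodule.ne_bot_iff _).mp hker
  refine ⟨x.1, fun h => hx0 (Subtype.ext h), fun i => ?_, ?_⟩
  · exact degreeOf_le_iff.mpr fun s hs => (mem_restrictDegree _ _ _).mp x.2 s hs i
  · have := congrArg Subtype.val (LinearMap.mem_ker.mp hxker)
    simpa [T] using this
end

section
/- Let m, n, d be positive integers with n ≥ 2, and let g_1, …, g_n ∈ ℂ[z_1, …, z_m] each have total degree at most d. If 2^n ≥ (2nd)^m, then there exists a nonzero multilinear polynomial A ∈ ℂ[x_1, …, x_n] (i.e., of degree at most 1 in each variable) such that A(g_1, …, g_n) is the zero polynomial in ℂ[z_1, …, z_m]. -/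
open MvPolynomial

/-- The `D = 2` instance of the dimension count in Lemma 3.1: if `2^n ≥ (2nd)^m`
then the map `(g_1, …, g_n)` admits a nonzero multilinear annihilator. -/
theorem multilinear_annihilator_of_dimension_count
    (m n d : ℕ) (hm : 1 ≤ m) (hn : 2 ≤ n) (hd : 1 ≤ d)
    (g : Fin n → MvPolynomial (Fin m) ℂ)
    (hg : ∀ i, (g i).totalDegree ≤ d)
    (hcount : (2 * n * d) ^ m ≤ 2 ^ n) :
    ∃ A : MvPolynomial (Fin n) ℂ, A ≠ 0 ∧ (∀ i, A.degreeOf i ≤ 1) ∧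
      MvPolynomial.aeval g A = 0 := by
  classical
  -- exponent map
  set E : (Fin n → Fin 2) → (Fin n →₀ ℕ) :=
    fun e => Finsupp.equivFunOnFinite.symm (fun i => (e i : ℕ)) with hE
  have hEinj : Function.Injective E := by
    intro a b hab
    funext i
    have := congrArg (fun f => f i) (Finsupp.equivFunOnFinite.symm.injective hab)
    exact Fin.ext this
  -- the linear map from coefficient vectors to evaluations' coefficients
  set P : ((Fin n → Fin 2) → ℂ) →ₗ[ℂ] MvPolynomial (Fin n) ℂ :=
    Fintype.linearCombination ℂ (fun e => monomial (E e) (1 : ℂ)) with hP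
  set F : ((Fin n → Fin 2) → ℂ) →ₗ[ℂ] ((Fin m → Fin (n * d + 1)) → ℂ) :=
    (LinearMap.pi fun t =>
      (lcoeff ℂ (Finsupp.equivFunOnFinite.symm fun j => (t j : ℕ))).comp
        (aeval g).toLinearMap).comp P with hF
  have hcard : Module.finrank ℂ ((Fin m → Fin (n * d + 1)) → ℂ)
      < Module.finrank ℂ ((Fin n → Fin 2) → ℂ) := by
    rw [Module.finrank_fintype_fun_eq_card, Module.finrank_fintype_fun_eq_card]
    simp only [Fintype.card_fun, Fintype.card_fin]
    calc (n * d + 1) ^ m < (2 * n * d) ^ m := by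
          have h2 : 2 ≤ n * d := le_trans hn (Nat.le_mul_of_pos_right n hd)
          have hlt : n * d + 1 < 2 * n * d := by rw [mul_assoc]; omega
          exact Nat.pow_lt_pow_left hlt (by omega)
      _ ≤ 2 ^ n := hcount
  have hker : LinearMap.ker F ≠ ⊥ := LinearMap.ker_ne_bot_of_finrank_lt hcard
  obtain ⟨c, hcF, hc0⟩ := (Submodule.ne_bot_iff _).mp hker
  refine ⟨P c, ?_, ?_, ?_⟩
  · -- P c ≠ 0
    obtain ⟨e0, he0⟩ : ∃ e0, c e0 ≠ 0 := by
      by_contra h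
      push_neg at h
      exact hc0 (funext h)
    intro h0
    apply he0
    have := congrArg (coeff (E e0)) h0
    rw [hP, Fintype.linearCombination_apply] at this
    simp only [coeff_zero] at this
    rw [coeff_sum, Finset.sum_eq_single e0] at this
    · simpa [coeff_smul, coeff_monomial] using this
    · intro b _ hb
      rw [coeff_smul, coeff_monomial, if_neg (hEinj.ne hb), smul_zero]
    · simp
  · -- multilinearity
    intro i
    rw [degreeOf_le_iff]
    intro u hu
    have hsupp : (P c).support ⊆ Finset.univ.biUnion
        (fun e => (c e • monomial (E e) (1 : ℂ)).support) := by
      rw [hP, Fintype.linearCombination_apply]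
      exact MvPolynomial.support_sum
    have := hsupp hu
    rw [Finset.mem_biUnion] at this
    obtain ⟨e, -, he⟩ := this
    have : u ∈ (monomial (E e) ((c e) • (1:ℂ))).support := by
      simpa [smul_monomial] using he
    have hu' : u = E e := by
      by_contra h
      rw [mem_support_iff, coeff_monomial, if_neg (fun h' => h h'.symm)] at this
      exact this rfl
    subst hu'
    simpa [hE] using (Fin.is_le (e i))
  · -- annihilation
    have hFc : F c = 0 := hcF
    set Q : MvPolynomial (Fin m) ℂ := aeval g (P c) with hQ
    have hdegQ : Q.totalDegree ≤ n * d := by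
      rw [hQ, hP, Fintype.linearCombination_apply, map_sum]
      apply (totalDegree_finset_sum _ _).trans
      apply Finset.sup_le
      intro e _
      rw [smul_monomial, smul_eq_mul, mul_one, aeval_monomial, algebraMap_eq]
      apply (totalDegree_mul _ _).trans
      rw [totalDegree_C, zero_add, Finsupp.prod]
      apply (totalDegree_finset_prod _ _).trans
      have h1 : ∀ i ∈ (E e).support, (g i ^ (E e) i).totalDegree ≤ d := by
        intro i _
        apply (totalDegree_pow _ _).trans
        have h2 : (E e) i ≤ 1 := by simpa [hE] using (Fin.is_le (e i))
        calc (E e) i * (g i).totalDegree ≤ 1 * d :=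
          Nat.mul_le_mul h2 (hg i)
        _ = d := one_mul d
      calc ((E e).support.sum fun i => (g i ^ (E e) i).totalDegree)
          ≤ (E e).support.sum (fun _ => d) := Finset.sum_le_sum h1
        _ = (E e).support.card * d := by rw [Finset.sum_const, smul_eq_mul]
        _ ≤ n * d := Nat.mul_le_mul_right d (by
            simpa using Finset.card_le_card (Finset.subset_univ (E e).support))
    -- show Q = 0
    show Q = 0
    ext u
    rw [coeff_zero]
    by_cases hu : u ∈ Q.support
    · have hub : ∀ j, u j ≤ n * d := by
        intro j
        have h1 : u j ≤ u.sum fun _ k => k := by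
          by_cases hj : j ∈ u.support
          · exact Finset.single_le_sum (fun _ _ => Nat.zero_le _) hj
          · simp [Finsupp.notMem_support_iff.mp hj]
        exact le_trans h1 (le_trans (le_totalDegree hu) hdegQ)
      set t : Fin m → Fin (n * d + 1) := fun j => ⟨u j, Nat.lt_succ_of_le (hub j)⟩ with ht
      have := congrArg (fun f => f t) hFc
      simp only [hF, LinearMap.comp_apply, LinearMap.pi_apply, LinearMap.coe_comp,
        Function.comp_apply, AlgHom.toLinearMap_apply, lcoeff_apply, Pi.zero_apply] at this
      have hteq : (Finsupp.equivFunOnFinite.symm fun j => ((t j : Fin (n*d+1)) : ℕ)) = u := by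
        apply Finsupp.equivFunOnFinite.symm_apply_eq.mpr
        funext j
        simp [ht]
      rwa [hteq] at this
    · simpa using (notMem_support_iff.mp hu)
end
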